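/- Let γ > 0 and let L_a and L_b be independent Gaussian random variables, each with mean γ and variance 2γ. Then X = sign(L_a) · sign(L_b) · min(|L_a|, |L_b|) has probability density function f_X(x) = (1/√(πγ)) · [ e^{−(x−γ)²/(4γ)} · Q((|x| − γ)/√(2γ)) + e^{−(x+γ)²/(4γ)} · Q((|x| + γ)/√(2γ)) ], where Q(t) = (1/√(2π)) ∫_t^∞ e^{−u²/2} du. -/

import Mathlib

open Real MeasureTheory ProbabilityTheory

/-- The Gaussian tail function Q(t) = (1/√(2π)) ∫_t^∞ e^{−u²/2} du. -/
noncomputable def gaussQ (t : ℝ) : ℝ :=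
  (1 / Real.sqrt (2 * Real.pi)) * ∫ u in Set.Ioi t, Real.exp (-u ^ 2 / 2)

open Set
open scoped ENNReal NNReal


lemma integrable_expsq : Integrable (fun u : ℝ => Real.exp (-u ^ 2 / 2)) := by
  have h := integrable_exp_neg_mul_sq (b := 1/2) (by norm_num)
  have : (fun u : ℝ => Real.exp (-u ^ 2 / 2)) = fun u : ℝ => Real.exp (-(1/2) * u ^ 2) := by
    funext u; ring_nf
  rw [this]; exact h

lemma gaussQ_antitone : Antitone gaussQ := by
  intro t s hts
  unfold gaussQ
  refine mul_le_mul_of_nonneg_left ?_ (by positivity)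
  refine setIntegral_mono_set integrable_expsq.integrableOn ?_ ?_
  · exact Filter.Eventually.of_forall fun u => (Real.exp_pos _).le
  · exact HasSubset.Subset.eventuallyLE (Set.Ioi_subset_Ioi hts)

lemma measurable_gaussQ : Measurable gaussQ := gaussQ_antitone.measurable

lemma measurable_realSign : Measurable Real.sign := by
  unfold Real.sign
  refine Measurable.ite ?_ measurable_const (Measurable.ite ?_ measurable_const measurable_const)
  · exact measurableSet_Iio (a := (0:ℝ))
  · exact measurableSet_Ioi (a := (0:ℝ))

lemma sign_mul_abs' (x : ℝ) : Real.sign x * |x| = x := by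
  rcases lt_trichotomy x 0 with h | h | h
  · rw [Real.sign_of_neg h, abs_of_neg h]; ring
  · simp [h]
  · rw [Real.sign_of_pos h, abs_of_pos h]; ring

lemma stdGauss_Ioi (t : ℝ) : gaussianReal 0 1 (Set.Ioi t) = ENNReal.ofReal (gaussQ t) := by
  rw [gaussianReal_apply_eq_integral 0 one_ne_zero]
  congr 1
  unfold gaussQ
  rw [gaussianPDFReal_def]
  simp only [NNReal.coe_one, mul_one, sub_zero]
  rw [MeasureTheory.integral_const_mul]
  rw [one_div]

lemma stdGauss_Iio (t : ℝ) : gaussianReal 0 1 (Set.Iio t) = ENNReal.ofReal (gaussQ (-t)) := by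
  rw [gaussianReal_apply_eq_integral 0 one_ne_zero]
  congr 1
  unfold gaussQ
  rw [gaussianPDFReal_def]
  simp only [NNReal.coe_one, mul_one, sub_zero]
  rw [MeasureTheory.integral_const_mul, one_div]
  congr 1
  have := integral_comp_neg_Ioi (-t) (fun u : ℝ => Real.exp (-u ^ 2 / 2))
  simp only [neg_neg, neg_sq] at this
  rw [integral_Iic_eq_integral_Iio] at this
  exact this.symm

lemma nu_eq_map {γ : ℝ} (hγ : 0 < γ) :
    gaussianReal γ (Real.toNNReal (2*γ)) =
      (gaussianReal 0 1).map (fun u => Real.sqrt (2*γ) * u + γ) := by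
  have h2γ : (0:ℝ) ≤ 2*γ := by linarith
  have : (fun u : ℝ => Real.sqrt (2*γ) * u + γ)
      = (· + γ) ∘ (fun u => Real.sqrt (2*γ) * u) := rfl
  rw [this, ← Measure.map_map (measurable_id'.add_const γ) (measurable_const_mul _),
    gaussianReal_map_const_mul, gaussianReal_map_add_const]
  congr 1
  · rw [mul_zero, zero_add]
  · rw [mul_one]
    ext
    rw [Real.coe_toNNReal _ h2γ]
    exact (Real.sq_sqrt h2γ).symm

lemma nu_Ioi {γ : ℝ} (hγ : 0 < γ) (c : ℝ) :
    gaussianReal γ (Real.toNNReal (2*γ)) (Set.Ioi c)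
      = ENNReal.ofReal (gaussQ ((c - γ) / Real.sqrt (2*γ))) := by
  have hσ : 0 < Real.sqrt (2*γ) := Real.sqrt_pos.mpr (by linarith)
  rw [nu_eq_map hγ, Measure.map_apply ((measurable_const_mul _).add_const γ) measurableSet_Ioi]
  have hset : (fun u : ℝ => Real.sqrt (2*γ) * u + γ) ⁻¹' Set.Ioi c
      = Set.Ioi ((c - γ) / Real.sqrt (2*γ)) := by
    ext u
    simp only [Set.mem_preimage, Set.mem_Ioi]
    rw [div_lt_iff₀ hσ, mul_comm u]
    constructor <;> intro h <;> linarith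
  rw [hset, stdGauss_Ioi]

lemma nu_Iio {γ : ℝ} (hγ : 0 < γ) (c : ℝ) :
    gaussianReal γ (Real.toNNReal (2*γ)) (Set.Iio c)
      = ENNReal.ofReal (gaussQ ((γ - c) / Real.sqrt (2*γ))) := by
  have hσ : 0 < Real.sqrt (2*γ) := Real.sqrt_pos.mpr (by linarith)
  rw [nu_eq_map hγ, Measure.map_apply ((measurable_const_mul _).add_const γ) measurableSet_Iio]
  have hset : (fun u : ℝ => Real.sqrt (2*γ) * u + γ) ⁻¹' Set.Iio c
      = Set.Iio ((c - γ) / Real.sqrt (2*γ)) := by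
    ext u
    simp only [Set.mem_preimage, Set.mem_Iio]
    rw [lt_div_iff₀ hσ, mul_comm u]
    constructor <;> intro h <;> linarith
  rw [hset, stdGauss_Iio]
  congr 1
  rw [← neg_div, neg_sub]

lemma gaussQ_nonneg (t : ℝ) : 0 ≤ gaussQ t := by
  unfold gaussQ
  exact mul_nonneg (by positivity) (integral_nonneg fun u => (Real.exp_pos _).le)

lemma density_pointwise {γ : ℝ} (hγ : 0 < γ) (x : ℝ) :
    ENNReal.ofReal ((1 / Real.sqrt (Real.pi * γ)) *
      (Real.exp (-(x - γ) ^ 2 / (4 * γ)) * gaussQ ((|x| - γ) / Real.sqrt (2 * γ)) +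
       Real.exp (-(x + γ) ^ 2 / (4 * γ)) * gaussQ ((|x| + γ) / Real.sqrt (2 * γ))))
    = 2 * gaussianPDF γ (Real.toNNReal (2*γ)) x
        * gaussianReal γ (Real.toNNReal (2*γ)) (Set.Ioi |x|)
      + 2 * gaussianPDF γ (Real.toNNReal (2*γ)) (-x)
        * gaussianReal γ (Real.toNNReal (2*γ)) (Set.Iio (-|x|)) := by
  have h2γ : (0:ℝ) ≤ 2*γ := by linarith
  rw [nu_Ioi hγ, nu_Iio hγ, show γ - -|x| = |x| + γ by ring]
  rw [gaussianPDF_def]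
  rw [show (2:ℝ≥0∞) = ENNReal.ofReal 2 by simp]
  have hp1 : (0:ℝ) ≤ 2 * gaussianPDFReal γ (Real.toNNReal (2*γ)) x :=
    mul_nonneg (by norm_num) (gaussianPDFReal_nonneg _ _ _)
  have hp2 : (0:ℝ) ≤ 2 * gaussianPDFReal γ (Real.toNNReal (2*γ)) (-x) :=
    mul_nonneg (by norm_num) (gaussianPDFReal_nonneg _ _ _)
  rw [← ENNReal.ofReal_mul (by norm_num), ← ENNReal.ofReal_mul hp1,
    ← ENNReal.ofReal_mul (by norm_num), ← ENNReal.ofReal_mul hp2,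
    ← ENNReal.ofReal_add (mul_nonneg hp1 (gaussQ_nonneg _)) (mul_nonneg hp2 (gaussQ_nonneg _))]
  congr 1
  rw [gaussianPDFReal_def]
  simp only [Real.coe_toNNReal _ h2γ]
  rw [show (2:ℝ)*(2*γ) = 4*γ by ring, show (-x - γ)^2 = (x+γ)^2 by ring]
  have hconst : (Real.sqrt (2*Real.pi*(2*γ)))⁻¹ = (2 * Real.sqrt (Real.pi*γ))⁻¹ := by
    rw [show 2*Real.pi*(2*γ) = (2:ℝ)^2*(Real.pi*γ) by ring,
      Real.sqrt_mul (by positivity), Real.sqrt_sq (by norm_num)]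
  rw [hconst]
  have hs : 0 < Real.sqrt (Real.pi*γ) := Real.sqrt_pos.mpr (by positivity)
  field_simp

theorem density_of_signed_min_gaussian
    {Ω : Type*} [MeasurableSpace Ω] (μ : Measure Ω) [IsProbabilityMeasure μ]
    (γ : ℝ) (hγ : 0 < γ)
    (La Lb : Ω → ℝ) (hLa : Measurable La) (hLb : Measurable Lb)
    (hindep : IndepFun La Lb μ)
    (hLa_law : μ.map La = gaussianReal γ (Real.toNNReal (2 * γ)))
    (hLb_law : μ.map Lb = gaussianReal γ (Real.toNNReal (2 * γ)))
    (X : Ω → ℝ)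
    (hX : ∀ ω, X ω = Real.sign (La ω) * Real.sign (Lb ω) * min |La ω| |Lb ω|) :
    μ.map X = volume.withDensity
      (fun x => ENNReal.ofReal ((1 / Real.sqrt (Real.pi * γ)) *
        (Real.exp (-(x - γ) ^ 2 / (4 * γ)) * gaussQ ((|x| - γ) / Real.sqrt (2 * γ)) +
         Real.exp (-(x + γ) ^ 2 / (4 * γ)) * gaussQ ((|x| + γ) / Real.sqrt (2 * γ))))) := by
  have h2γ : (0:ℝ) ≤ 2 * γ := by linarith
  have hv : Real.toNNReal (2 * γ) ≠ 0 := by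
    rw [ne_eq, Real.toNNReal_eq_zero, not_le]; linarith
  set v : ℝ≥0 := Real.toNNReal (2 * γ) with hvdef
  set ν : Measure ℝ := gaussianReal γ v with hνdef
  -- the function g on pairs
  set g : ℝ × ℝ → ℝ := fun p => Real.sign p.1 * Real.sign p.2 * min |p.1| |p.2| with hgdef
  have hg : Measurable g :=
    ((measurable_realSign.comp measurable_fst).mul
      (measurable_realSign.comp measurable_snd)).mul
      (measurable_fst.abs.min measurable_snd.abs)
  have hpair : Measurable fun ω => (La ω, Lb ω) := hLa.prodMk hLb
  have hXg : X = g ∘ fun ω => (La ω, Lb ω) := funext fun ω => hX ω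
  have hXmeas : Measurable X := hXg ▸ hg.comp hpair
  have hmap : μ.map X = (ν.prod ν).map g := by
    rw [hXg, ← Measure.map_map hg hpair,
      (indepFun_iff_map_prod_eq_prod_map_map hLa.aemeasurable hLb.aemeasurable).mp hindep,
      hLa_law, hLb_law]
  -- tail measurability
  have hIoiM : Measurable fun c : ℝ => ν (Set.Ioi c) :=
    Antitone.measurable fun a b hab => measure_mono (Set.Ioi_subset_Ioi hab)
  have hIioM : Measurable fun c : ℝ => ν (Set.Iio c) :=
    Monotone.measurable fun a b hab => measure_mono (Set.Iio_subset_Iio hab)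
  have hf1M : Measurable fun t : ℝ => ν (Set.Ioi |t|) := hIoiM.comp measurable_abs
  have hf2M : Measurable fun t : ℝ => ν (Set.Iio (-|t|)) := hIioM.comp measurable_abs.neg
  have hatom : ∀ a : ℝ, ν {a} = 0 := fun a =>
    gaussianReal_absolutelyContinuous γ hv (measure_singleton a)
  -- facts about g
  have hg_pos : ∀ a b : ℝ, |a| < b → g (a, b) = a := by
    intro a b h
    have hb : 0 < b := lt_of_le_of_lt (abs_nonneg a) h
    have hmin : min |a| |b| = |a| := min_eq_left (by rw [abs_of_pos hb]; exact h.le)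
    show Real.sign a * Real.sign b * min |a| |b| = a
    rw [hmin, Real.sign_of_pos hb, mul_one, sign_mul_abs']
  have hg_neg : ∀ a b : ℝ, b < -|a| → g (a, b) = -a := by
    intro a b h
    have hb : b < 0 := lt_of_lt_of_le h (neg_nonpos.mpr (abs_nonneg a))
    have habs : |b| = -b := abs_of_neg hb
    have hmin : min |a| |b| = |a| := min_eq_left (by rw [habs]; linarith)
    show Real.sign a * Real.sign b * min |a| |b| = -a
    rw [hmin, Real.sign_of_neg hb]
    linear_combination (-1 : ℝ) * sign_mul_abs' a
  haveI : IsProbabilityMeasure (μ.map X) := Measure.isProbabilityMeasure_map hXmeas.aemeasurable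
  refine Measure.ext_of_Iic (μ.map X) _ fun x => ?_
  rw [hmap, Measure.map_apply hg measurableSet_Iic]
  -- the sets
  set S : Set (ℝ × ℝ) := g ⁻¹' Set.Iic x with hSdef
  have hSm : MeasurableSet S := hg measurableSet_Iic
  set D : Set (ℝ × ℝ) := {p | |p.1| < |p.2|} with hDdef
  set D' : Set (ℝ × ℝ) := {p | |p.2| < |p.1|} with hD'def
  have hDm : MeasurableSet D := measurableSet_lt measurable_fst.abs measurable_snd.abs
  have hD'm : MeasurableSet D' := measurableSet_lt measurable_snd.abs measurable_fst.abs
  set Tp : Set (ℝ × ℝ) := {p | p.1 ≤ x ∧ |p.1| < p.2} with hTpdef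
  set Tn : Set (ℝ × ℝ) := {p | -p.1 ≤ x ∧ p.2 < -|p.1|} with hTndef
  have hTpm : MeasurableSet Tp :=
    (measurableSet_le measurable_fst measurable_const).inter
      (measurableSet_lt measurable_fst.abs measurable_snd)
  have hTnm : MeasurableSet Tn :=
    (measurableSet_le measurable_fst.neg measurable_const).inter
      (measurableSet_lt measurable_snd measurable_fst.abs.neg)
  -- the diagonal-type set is null
  have hEnull : (ν.prod ν) {p : ℝ × ℝ | |p.1| = |p.2|} = 0 := by
    have hsub : {p : ℝ × ℝ | |p.1| = |p.2|}
        ⊆ {p : ℝ × ℝ | p.1 = p.2} ∪ {p : ℝ × ℝ | p.1 = -p.2} := by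
      intro p hp
      rcases abs_eq_abs.mp hp with h | h
      · exact Or.inl h
      · exact Or.inr h
    refine measure_mono_null hsub (measure_union_null ?_ ?_)
    · rw [Measure.prod_apply (measurableSet_eq_fun measurable_fst measurable_snd)]
      have hfib : ∀ a : ℝ, (Prod.mk a ⁻¹' {p : ℝ × ℝ | p.1 = p.2}) = {a} := by
        intro a; ext b
        simp only [Set.mem_preimage, Set.mem_setOf_eq, Set.mem_singleton_iff, eq_comm]
      simp_rw [hfib, hatom]
      simp
    · rw [Measure.prod_apply (show MeasurableSet {p : ℝ × ℝ | p.1 = -p.2} from measurableSet_eq_fun measurable_fst measurable_snd.neg)]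
      have hfib : ∀ a : ℝ, (Prod.mk a ⁻¹' {p : ℝ × ℝ | p.1 = -p.2}) = {-a} := by
        intro a; ext b
        simp only [Set.mem_preimage, Set.mem_setOf_eq, Set.mem_singleton_iff]
        constructor <;> intro h <;> linarith
      simp_rw [hfib, hatom]
      simp
  -- decomposition of S
  have hdisjDD' : Disjoint (S ∩ D) (S ∩ D') := by
    rw [Set.disjoint_left]
    rintro p ⟨-, h1⟩ ⟨-, h2⟩
    have h1' : |p.1| < |p.2| := h1
    have h2' : |p.2| < |p.1| := h2
    exact lt_asymm h1' h2'
  have hdecomp : (ν.prod ν) S = (ν.prod ν) (S ∩ D) + (ν.prod ν) (S ∩ D') := by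
    have h1 : (ν.prod ν) S = (ν.prod ν) (S ∩ (D ∪ D')) := by
      rw [← measure_inter_add_diff S (hDm.union hD'm)]
      have h0 : (ν.prod ν) (S \ (D ∪ D')) = 0 := by
        refine measure_mono_null ?_ hEnull
        rintro ⟨a, b⟩ ⟨-, h⟩
        simp only [Set.mem_union, hDdef, hD'def, Set.mem_setOf_eq, not_or, not_lt] at h
        exact le_antisymm h.2 h.1
      rw [h0, add_zero]
    rw [h1, Set.inter_union_distrib_left,
      measure_union hdisjDD' (hSm.inter hD'm)]
  -- swap symmetry
  have hswapmeas : (ν.prod ν) (S ∩ D') = (ν.prod ν) (S ∩ D) := by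
    have hgswap : ∀ p : ℝ × ℝ, g p.swap = g p := by
      rintro ⟨a, b⟩
      show Real.sign b * Real.sign a * min |b| |a| = Real.sign a * Real.sign b * min |a| |b|
      rw [min_comm, mul_comm (Real.sign b)]
    have hset : S ∩ D' = Prod.swap ⁻¹' (S ∩ D) := by
      ext p
      simp only [Set.mem_inter_iff, Set.mem_preimage, hSdef, hDdef, hD'def,
        Set.mem_setOf_eq, Set.mem_Iic]
      rw [hgswap p]
      exact Iff.rfl
    rw [hset, ← Measure.map_apply measurable_swap (hSm.inter hDm), Measure.prod_swap]
  -- S ∩ D = Tp ∪ Tn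
  have hSplit : S ∩ D = Tp ∪ Tn := by
    ext ⟨a, b⟩
    simp only [Set.mem_inter_iff, Set.mem_preimage, Set.mem_Iic, hSdef, hDdef, hTpdef,
      hTndef, Set.mem_setOf_eq, Set.mem_union]
    constructor
    · rintro ⟨hgx, hab⟩
      rcases le_or_gt b 0 with hb | hb
      · right
        have habs : |b| = -b := abs_of_nonpos hb
        have hb' : b < -|a| := by rw [habs] at hab; linarith
        rw [hg_neg a b hb'] at hgx
        exact ⟨hgx, hb'⟩
      · left
        have hb' : |a| < b := by rwa [abs_of_pos hb] at hab
        rw [hg_pos a b hb'] at hgx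
        exact ⟨hgx, hb'⟩
    · rintro (⟨h1, h2⟩ | ⟨h1, h2⟩)
      · have hb : 0 < b := lt_of_le_of_lt (abs_nonneg a) h2
        exact ⟨by rw [hg_pos a b h2]; exact h1, by rwa [abs_of_pos hb]⟩
      · have hb : b < 0 := lt_of_lt_of_le h2 (neg_nonpos.mpr (abs_nonneg a))
        refine ⟨by rw [hg_neg a b h2]; exact h1, ?_⟩
        rw [abs_of_neg hb]; linarith
  have hTdisj : Disjoint Tp Tn := by
    rw [Set.disjoint_left]
    rintro ⟨a, b⟩ ⟨-, h1⟩ ⟨-, h2⟩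
    have : (0:ℝ) ≤ |a| := abs_nonneg a
    linarith
  -- fiberwise computation of Tp and Tn
  have hTpmeas : (ν.prod ν) Tp = ∫⁻ a in Set.Iic x, ν (Set.Ioi |a|) ∂ν := by
    rw [Measure.prod_apply hTpm]
    have hfib : ∀ a : ℝ, ν (Prod.mk a ⁻¹' Tp)
        = (Set.Iic x).indicator (fun a => ν (Set.Ioi |a|)) a := by
      intro a
      by_cases h : a ≤ x
      · rw [Set.indicator_of_mem (Set.mem_Iic.mpr h)]
        congr 1
        ext b
        simp only [Set.mem_preimage, hTpdef, Set.mem_setOf_eq, Set.mem_Ioi, h, true_and]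
      · rw [Set.indicator_of_notMem (fun hh => h (Set.mem_Iic.mp hh))]
        have : Prod.mk a ⁻¹' Tp = ∅ := by
          ext b
          simp only [Set.mem_preimage, hTpdef, Set.mem_setOf_eq, Set.mem_empty_iff_false,
            iff_false, not_and]
          intro h'; exact absurd h' h
        rw [this, measure_empty]
    simp_rw [hfib]
    rw [lintegral_indicator measurableSet_Iic]
  have hTnmeas : (ν.prod ν) Tn = ∫⁻ a in Set.Ici (-x), ν (Set.Iio (-|a|)) ∂ν := by
    rw [Measure.prod_apply hTnm]
    have hfib : ∀ a : ℝ, ν (Prod.mk a ⁻¹' Tn)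
        = (Set.Ici (-x)).indicator (fun a => ν (Set.Iio (-|a|))) a := by
      intro a
      by_cases h : -x ≤ a
      · rw [Set.indicator_of_mem (Set.mem_Ici.mpr h)]
        congr 1
        ext b
        have hax : -a ≤ x := neg_le.mp h
        simp only [Set.mem_preimage, hTndef, Set.mem_setOf_eq, Set.mem_Iio, hax, true_and]
      · rw [Set.indicator_of_notMem (fun hh => h (Set.mem_Ici.mp hh))]
        have : Prod.mk a ⁻¹' Tn = ∅ := by
          ext b
          simp only [Set.mem_preimage, hTndef, Set.mem_setOf_eq, Set.mem_empty_iff_false,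
            iff_false, not_and]
          intro h'
          exact absurd (neg_le.mp h') h
        rw [this, measure_empty]
    simp_rw [hfib]
    rw [lintegral_indicator measurableSet_Ici]
  -- density side
  rw [withDensity_apply _ measurableSet_Iic]
  have hfun : (fun t : ℝ => ENNReal.ofReal ((1 / Real.sqrt (Real.pi * γ)) *
      (Real.exp (-(t - γ) ^ 2 / (4 * γ)) * gaussQ ((|t| - γ) / Real.sqrt (2 * γ)) +
       Real.exp (-(t + γ) ^ 2 / (4 * γ)) * gaussQ ((|t| + γ) / Real.sqrt (2 * γ)))))
      = fun t : ℝ => 2 * gaussianPDF γ v t * ν (Set.Ioi |t|)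
        + 2 * gaussianPDF γ v (-t) * ν (Set.Iio (-|t|)) :=
    funext fun t => density_pointwise hγ t
  rw [hfun]
  have hm1 : Measurable fun t : ℝ => 2 * gaussianPDF γ v t * ν (Set.Ioi |t|) :=
    ((measurable_gaussianPDF γ v).const_mul 2).mul hf1M
  have hm2 : Measurable fun t : ℝ => 2 * gaussianPDF γ v t * ν (Set.Iio (-|t|)) :=
    ((measurable_gaussianPDF γ v).const_mul 2).mul hf2M
  rw [lintegral_add_left hm1]
  -- first term
  have hrestrict : ν.restrict (Set.Iic x) =
      (volume.restrict (Set.Iic x)).withDensity (gaussianPDF γ v) := by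
    rw [hνdef, gaussianReal_of_var_ne_zero γ hv, restrict_withDensity measurableSet_Iic]
  have hterm1 : ∫⁻ t in Set.Iic x, 2 * gaussianPDF γ v t * ν (Set.Ioi |t|) ∂volume
      = 2 * ∫⁻ a in Set.Iic x, ν (Set.Ioi |a|) ∂ν := by
    simp_rw [mul_assoc]
    rw [lintegral_const_mul 2 (show Measurable fun t => gaussianPDF γ v t * ν (Set.Ioi |t|) from (measurable_gaussianPDF γ v).mul hf1M)]
    congr 1
    rw [hrestrict, lintegral_withDensity_eq_lintegral_mul _ (measurable_gaussianPDF γ v) hf1M]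
    rfl
  -- second term with negation substitution
  have hterm2 : ∫⁻ t in Set.Iic x, 2 * gaussianPDF γ v (-t) * ν (Set.Iio (-|t|)) ∂volume
      = 2 * ∫⁻ a in Set.Ici (-x), ν (Set.Iio (-|a|)) ∂ν := by
    have hGm : Measurable fun s : ℝ => 2 * gaussianPDF γ v s * ν (Set.Iio (-|s|)) := hm2
    have hsetneg : (Neg.neg ⁻¹' Set.Ici (-x) : Set ℝ) = Set.Iic x := by
      ext t
      simp only [Set.mem_preimage, Set.mem_Ici, Set.mem_Iic, neg_le_neg_iff]
    have hneg : ∫⁻ s in Set.Ici (-x), 2 * gaussianPDF γ v s * ν (Set.Iio (-|s|)) ∂volume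
        = ∫⁻ t in Set.Iic x, 2 * gaussianPDF γ v (-t) * ν (Set.Iio (-|-t|)) ∂volume := by
      conv_lhs => rw [← Measure.map_neg_eq_self (volume : Measure ℝ)]
      rw [setLIntegral_map measurableSet_Ici hGm measurable_neg, hsetneg]
    simp_rw [abs_neg] at hneg
    rw [← hneg]
    simp_rw [mul_assoc]
    rw [lintegral_const_mul 2 (show Measurable fun t => gaussianPDF γ v t * ν (Set.Iio (-|t|)) from (measurable_gaussianPDF γ v).mul hf2M)]
    congr 1
    have hrestrict' : ν.restrict (Set.Ici (-x)) =
        (volume.restrict (Set.Ici (-x))).withDensity (gaussianPDF γ v) := by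
      rw [hνdef, gaussianReal_of_var_ne_zero γ hv, restrict_withDensity measurableSet_Ici]
    rw [hrestrict', lintegral_withDensity_eq_lintegral_mul _ (measurable_gaussianPDF γ v) hf2M]
    rfl
  rw [hterm1, hterm2]
  -- put everything together
  rw [hdecomp, hswapmeas, hSplit, measure_union hTdisj hTnm, hTpmeas, hTnmeas]
  ring
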